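/- Let k ≥ 1, let S = {1,…,k}, and let D ⊆ {1,…,k−1} be any (possibly empty) set of positive integers less than k. Let G be a finite simple graph, G' a finite simple graph with V(G) ⊆ V(G'), and Blue_0, Red_0 disjoint subsets of V(G') \ V(G) such that: (a) every vertex of V(G') \ (V(G) ∪ Blue_0 ∪ Red_0) is at graph distance at most k in G' from some vertex of Blue_0 and at distance at most k from some vertex of Red_0; (b) every vertex of V(G) is at distance at least k+1 from every vertex of Blue_0 ∪ Red_0; (c) for distinct u, v ∈ V(G), dist_{G'}(u,v) = k if uv is an edge of G, and dist_{G'}(u,v) ≥ k+1 otherwise; (d) any two distinct vertices of Blue_0 ∪ Red_0 are at distance at least k+1. Then the distance game D⟨D,S⟩ on G' starting from the position with blue pieces on Blue_0 and red pieces on Red_0 is play-for-play equivalent to Col on G starting from the empty position: positions correspond by restricting the pieces to V(G), each player's legal moves agree under this correspondence (Left may place on an unoccupied u ∈ V(G) if and only if no G-neighbour of u is blue, and symmetrically for Right), and in particular the player moving first (respectively, second) has a winning strategy in one game if and only if in the other. -/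

import Mathlib

universe u

namespace SetTheory

/-- The type of pre-games (as in Mathlib of December 2024, since removed from Mathlib). -/
inductive PGame : Type (u + 1)
  | mk : ∀ α β : Type u, (α → PGame) → (β → PGame) → PGame

namespace PGame

/-- The indexing type for allowable moves by Left. -/
def LeftMoves : PGame → Type u
  | mk l _ _ _ => l

/-- The indexing type for allowable moves by Right. -/
def RightMoves : PGame → Type u
  | mk _ r _ _ => r

/-- The new game after Left makes an allowed move. -/
def moveLeft : ∀ g : PGame, LeftMoves g → PGame
  | mk _l _ L _ => L

/-- The new game after Right makes an allowed move. -/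
def moveRight : ∀ g : PGame, RightMoves g → PGame
  | mk _ _r _ R => R

/-- The zero game. -/
instance : Zero PGame :=
  ⟨mk PEmpty PEmpty PEmpty.elim PEmpty.elim⟩

/-- Auxiliary recursion on the second game for `leLF`. -/
def leLFAux {xl xr : Type u} (xL : xl → PGame) (xR : xr → PGame)
    (IHl : xl → PGame → Prop × Prop) (IHr : xr → PGame → Prop × Prop) : PGame → Prop × Prop
  | mk yl yr yL yR =>
    ((∀ i, (IHl i (mk yl yr yL yR)).2) ∧ ∀ j, (leLFAux xL xR IHl IHr (yR j)).2,
      (∃ i, (leLFAux xL xR IHl IHr (yL i)).1) ∨ ∃ j, (IHr j (mk yl yr yL yR)).1)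

/-- The pair of relations `(x ≤ y, x ⧏ y)`, defined by mutual recursion. -/
def leLF : PGame → PGame → Prop × Prop
  | mk _ _ xL xR => leLFAux xL xR (fun i => leLF (xL i)) (fun j => leLF (xR j))

/-- The less or equal relation on pre-games. -/
instance le : LE PGame :=
  ⟨fun x y => (leLF x y).1⟩

/-- The less or fuzzy relation on pre-games: `x ⧏ y` iff `¬ y ≤ x`. -/
def LF (x y : PGame) : Prop :=
  ¬y ≤ x

infixl:50 " ⧏ " => PGame.LF

/-- `Relabelling x y` says that `x` and `y` are really the same game, just dressed up
differently. -/
inductive Relabelling : PGame.{u} → PGame.{u} → Type (u + 1)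
  | mk : ∀ {x y : PGame} (L : x.LeftMoves ≃ y.LeftMoves) (R : x.RightMoves ≃ y.RightMoves),
      (∀ i, Relabelling (x.moveLeft i) (y.moveLeft (L i))) →
        (∀ j, Relabelling (x.moveRight j) (y.moveRight (R j))) → Relabelling x y

infixl:50 " ≡r " => PGame.Relabelling

end PGame

end SetTheory

open SimpleGraph SetTheory

/-- In the distance game `D⟨D,S⟩` on the graph `G`, from the position with blue pieces on
`blue` and red pieces on `red`, Left may legally place a blue piece on the vertex `v`. -/
def LeftMove {W : Type*} (G : SimpleGraph W) (D S : Set ℕ) (blue red : Finset W) (v : W) : Prop :=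
  v ∉ blue ∧ v ∉ red ∧ (∀ r ∈ red, ∀ d ∈ D, G.edist v r ≠ (d : ℕ∞)) ∧
    ∀ b ∈ blue, ∀ s ∈ S, G.edist v b ≠ (s : ℕ∞)

/-- Right may legally place a red piece on the vertex `v`. -/
def RightMove {W : Type*} (G : SimpleGraph W) (D S : Set ℕ) (blue red : Finset W) (v : W) : Prop :=
  v ∉ blue ∧ v ∉ red ∧ (∀ b ∈ blue, ∀ d ∈ D, G.edist v b ≠ (d : ℕ∞)) ∧
    ∀ r ∈ red, ∀ s ∈ S, G.edist v r ≠ (s : ℕ∞)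

/-- The distance game `D⟨D,S⟩` on `G` from the position `(blue, red)`, as a combinatorial
game (normal play: a player with no legal move loses). -/
def distGame {W : Type*} [Fintype W] [DecidableEq W] (G : SimpleGraph W) (D S : Set ℕ)
    (blue red : Finset W) : PGame :=
  PGame.mk {v // LeftMove G D S blue red v} {v // RightMove G D S blue red v}
    (fun x => distGame G D S (insert x.1 blue) red)
    (fun x => distGame G D S blue (insert x.1 red))
termination_by ((blue ∪ red)ᶜ).card
decreasing_by
  · obtain ⟨h1, h2, -, -⟩ := x.2
    calc ((insert x.1 blue ∪ red)ᶜ).card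
        = (((blue ∪ red)ᶜ).erase x.1).card := by
          rw [Finset.insert_union, Finset.compl_insert]
      _ < ((blue ∪ red)ᶜ).card :=
          Finset.card_erase_lt_of_mem (Finset.mem_compl.2 (by simp [h1, h2]))
  · obtain ⟨h1, h2, -, -⟩ := x.2
    calc ((blue ∪ insert x.1 red)ᶜ).card
        = (((blue ∪ red)ᶜ).erase x.1).card := by
          rw [Finset.union_insert, Finset.compl_insert]
      _ < ((blue ∪ red)ᶜ).card :=
          Finset.card_erase_lt_of_mem (Finset.mem_compl.2 (by simp [h1, h2]))

/-- `BiGraph-Node-Kayles` on a bipartite graph `G` with parts `VL`, `VR`, from the position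
where `occ` is the set of occupied vertices: players alternately occupy vertices that are
neither equal nor adjacent to a previously occupied vertex, Left occupying only vertices of
`VL` and Right only vertices of `VR`; a player with no legal move loses. -/
def bnkGame {V : Type*} [Fintype V] [DecidableEq V] (G : SimpleGraph V) (VL VR : Finset V)
    (occ : Finset V) : PGame :=
  PGame.mk {v // v ∈ VL ∧ v ∉ occ ∧ ∀ u ∈ occ, ¬G.Adj v u}
    {v // v ∈ VR ∧ v ∉ occ ∧ ∀ u ∈ occ, ¬G.Adj v u}
    (fun x => bnkGame G VL VR (insert x.1 occ))
    (fun x => bnkGame G VL VR (insert x.1 occ))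
termination_by occᶜ.card
decreasing_by
  all_goals
  · obtain ⟨-, h1, -⟩ := x.2
    calc ((insert x.1 occ)ᶜ).card = (occᶜ.erase x.1).card := by rw [Finset.compl_insert]
      _ < occᶜ.card := Finset.card_erase_lt_of_mem (Finset.mem_compl.2 h1)

/-- Reflexive relabelling. -/
def relabRefl : ∀ x : PGame.{u}, x ≡r x
  | PGame.mk _ _ L R => PGame.Relabelling.mk (Equiv.refl _) (Equiv.refl _)
      (fun i => relabRefl (L i)) (fun j => relabRefl (R j))

theorem leLF_mk_fst {xl xr yl yr : Type u} (xL : xl → PGame.{u}) (xR : xr → PGame.{u})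
    (yL : yl → PGame.{u}) (yR : yr → PGame.{u}) :
    (PGame.leLF (PGame.mk xl xr xL xR) (PGame.mk yl yr yL yR)).1 ↔
      (∀ i, (PGame.leLF (xL i) (PGame.mk yl yr yL yR)).2) ∧
        ∀ j, (PGame.leLF (PGame.mk xl xr xL xR) (yR j)).2 := Iff.rfl

theorem leLF_mk_snd {xl xr yl yr : Type u} (xL : xl → PGame.{u}) (xR : xr → PGame.{u})
    (yL : yl → PGame.{u}) (yR : yr → PGame.{u}) :
    (PGame.leLF (PGame.mk xl xr xL xR) (PGame.mk yl yr yL yR)).2 ↔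
      (∃ i, (PGame.leLF (PGame.mk xl xr xL xR) (yL i)).1) ∨
        ∃ j, (PGame.leLF (xR j) (PGame.mk yl yr yL yR)).1 := Iff.rfl

theorem relab_leLF (x : PGame.{u}) : ∀ (y x' y' : PGame.{u}), x ≡r x' → y ≡r y' →
    ((PGame.leLF x y).1 ↔ (PGame.leLF x' y').1) ∧ ((PGame.leLF x y).2 ↔ (PGame.leLF x' y').2) := by
  induction x with
  | mk xl xr xL xR ihxL ihxR =>
  intro y
  induction y with
  | mk yl yr yL yR ihyL ihyR =>
  intro x' y' hx hy
  cases x' with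
  | mk xl' xr' xL' xR' =>
  cases y' with
  | mk yl' yr' yL' yR' =>
  obtain ⟨Lx, Rx, hLx, hRx⟩ := id hx
  obtain ⟨Ly, Ry, hLy, hRy⟩ := id hy
  rw [leLF_mk_fst, leLF_mk_fst, leLF_mk_snd, leLF_mk_snd]
  constructor
  · constructor
    · rintro ⟨h1, h2⟩
      refine ⟨fun i => ?_, fun j => ?_⟩
      · obtain ⟨i0, rfl⟩ := Lx.surjective i
        exact ((ihxL i0 _ _ _ (hLx i0) hy).2).1 (h1 i0)
      · obtain ⟨j0, rfl⟩ := Ry.surjective j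
        exact ((ihyR j0 _ _ hx (hRy j0)).2).1 (h2 j0)
    · rintro ⟨h1, h2⟩
      exact ⟨fun i => ((ihxL i _ _ _ (hLx i) hy).2).2 (h1 (Lx i)),
        fun j => ((ihyR j _ _ hx (hRy j)).2).2 (h2 (Ry j))⟩
  · constructor
    · rintro (⟨i, h⟩ | ⟨j, h⟩)
      · exact Or.inl ⟨Ly i, ((ihyL i _ _ hx (hLy i)).1).1 h⟩
      · exact Or.inr ⟨Rx j, ((ihxR j _ _ _ (hRx j) hy).1).1 h⟩
    · rintro (⟨i, h⟩ | ⟨j, h⟩)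
      · obtain ⟨i0, rfl⟩ := Ly.surjective i
        exact Or.inl ⟨i0, ((ihyL i0 _ _ hx (hLy i0)).1).2 h⟩
      · obtain ⟨j0, rfl⟩ := Rx.surjective j
        exact Or.inr ⟨j0, ((ihxR j0 _ _ _ (hRx j0) hy).1).2 h⟩

open SetTheory.PGame in
/-- for `S = {1,…,k}` and `D ⊆ {1,…,k−1}`, under hypotheses (a)–(d), the
distance game `D⟨D,S⟩` on `G'` starting from the position with blue pieces on `Blue0` and
red pieces on `Red0` is play-for-play equivalent to `Col = D⟨∅,{1}⟩` on `G` starting from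
the empty position. -/
theorem stmt13 {V W : Type u} [Fintype V] [DecidableEq V] [Fintype W] [DecidableEq W]
    (k : ℕ) (hk : 1 ≤ k) (D : Set ℕ) (hD : ∀ d ∈ D, 1 ≤ d ∧ d < k)
    (G : SimpleGraph V) (G' : SimpleGraph W) (ι : V ↪ W)
    (Blue0 Red0 : Finset W) (hBR : Disjoint Blue0 Red0)
    (hB0 : ∀ v : V, ι v ∉ Blue0) (hR0 : ∀ v : V, ι v ∉ Red0)
    -- (a) every extra vertex is within distance `k` of `Blue0` and of `Red0`:
    (ha : ∀ w : W, (∀ v : V, ι v ≠ w) → w ∉ Blue0 → w ∉ Red0 →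
      (∃ b ∈ Blue0, G'.edist w b ≤ (k : ℕ∞)) ∧ (∃ r ∈ Red0, G'.edist w r ≤ (k : ℕ∞)))
    -- (b) every vertex of `V(G)` is at distance at least `k+1` from `Blue0 ∪ Red0`:
    (hb : ∀ v : V, ∀ w ∈ Blue0 ∪ Red0, (k : ℕ∞) + 1 ≤ G'.edist (ι v) w)
    -- (c) distances between vertices of `V(G)`:
    (hc : ∀ u v : V, u ≠ v →
      (G.Adj u v → G'.edist (ι u) (ι v) = (k : ℕ∞)) ∧
      (¬G.Adj u v → (k : ℕ∞) + 1 ≤ G'.edist (ι u) (ι v)))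
    -- (d) distinct vertices of `Blue0 ∪ Red0` are at distance at least `k+1`:
    (hd : ∀ w₁ ∈ Blue0 ∪ Red0, ∀ w₂ ∈ Blue0 ∪ Red0, w₁ ≠ w₂ →
      (k : ℕ∞) + 1 ≤ G'.edist w₁ w₂) :
    -- positions correspond by restricting the pieces to `V(G)`; each player's legal moves
    -- agree under this correspondence (Left may place on an unoccupied `u ∈ V(G)` iff no
    -- `G`-neighbour of `u` is blue, and symmetrically for Right):
    (∀ B R : Finset V, Disjoint B R →
      (∀ x : V,
        LeftMove G' D (Set.Icc 1 k) (Blue0 ∪ B.map ι) (Red0 ∪ R.map ι) (ι x) ↔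
          LeftMove G (∅ : Set ℕ) {1} B R x) ∧
      (∀ x : V,
        RightMove G' D (Set.Icc 1 k) (Blue0 ∪ B.map ι) (Red0 ∪ R.map ι) (ι x) ↔
          RightMove G (∅ : Set ℕ) {1} B R x) ∧
      (∀ w : W, (∀ v : V, ι v ≠ w) →
        ¬LeftMove G' D (Set.Icc 1 k) (Blue0 ∪ B.map ι) (Red0 ∪ R.map ι) w ∧
        ¬RightMove G' D (Set.Icc 1 k) (Blue0 ∪ B.map ι) (Red0 ∪ R.map ι) w)) ∧
    -- the two games are play-for-play equivalent:
    Nonempty (distGame G' D (Set.Icc 1 k) Blue0 Red0 ≡r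
      distGame G (∅ : Set ℕ) ({1} : Set ℕ) (∅ : Finset V) (∅ : Finset V)) ∧
    -- in particular, the player moving first (respectively, second) has a winning strategy
    -- in one game iff in the other:
    ((0 ⧏ distGame G' D (Set.Icc 1 k) Blue0 Red0 ↔
        0 ⧏ distGame G (∅ : Set ℕ) ({1} : Set ℕ) (∅ : Finset V) (∅ : Finset V)) ∧
      (0 ≤ distGame G' D (Set.Icc 1 k) Blue0 Red0 ↔
        0 ≤ distGame G (∅ : Set ℕ) ({1} : Set ℕ) (∅ : Finset V) (∅ : Finset V)) ∧
      (distGame G' D (Set.Icc 1 k) Blue0 Red0 ⧏ 0 ↔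
        distGame G (∅ : Set ℕ) ({1} : Set ℕ) (∅ : Finset V) (∅ : Finset V) ⧏ 0) ∧
      (distGame G' D (Set.Icc 1 k) Blue0 Red0 ≤ 0 ↔
        distGame G (∅ : Set ℕ) ({1} : Set ℕ) (∅ : Finset V) (∅ : Finset V) ≤ 0)) := by
  classical
  -- distance of a `G`-vertex to any initial piece is never in `[1,k]`
  have hfar : ∀ (x : V) (w : W), w ∈ Blue0 ∪ Red0 → ∀ s : ℕ, s ≤ k →
      G'.edist (ι x) w ≠ (s : ℕ∞) := by
    intro x w hw s hsk heq
    have h1 := hb x w hw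
    rw [heq, show ((k : ℕ∞) + 1) = ((k + 1 : ℕ) : ℕ∞) by push_cast; ring] at h1
    have h2 : k + 1 ≤ s := Nat.cast_le.mp h1
    omega
  have hfarB : ∀ (x : V), ∀ w ∈ Blue0, ∀ s : ℕ, s ≤ k → G'.edist (ι x) w ≠ (s : ℕ∞) :=
    fun x w hw => hfar x w (Finset.mem_union_left _ hw)
  have hfarR : ∀ (x : V), ∀ w ∈ Red0, ∀ s : ℕ, s ≤ k → G'.edist (ι x) w ≠ (s : ℕ∞) :=
    fun x w hw => hfar x w (Finset.mem_union_right _ hw)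
  -- distances between distinct `G`-vertices
  have hpair : ∀ x y : V, x ≠ y →
      ((∀ s ∈ Set.Icc 1 k, G'.edist (ι x) (ι y) ≠ (s : ℕ∞)) ↔ ¬ G.Adj x y) ∧
      (∀ d ∈ D, G'.edist (ι x) (ι y) ≠ (d : ℕ∞)) := by
    intro x y hxy
    obtain ⟨hadj, hnadj⟩ := hc x y hxy
    constructor
    · constructor
      · intro h hA
        exact h k (Set.mem_Icc.mpr ⟨hk, le_rfl⟩) (hadj hA)
      · intro hA s hs heq
        rw [Set.mem_Icc] at hs
        have h1 := hnadj hA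
        rw [heq, show ((k : ℕ∞) + 1) = ((k + 1 : ℕ) : ℕ∞) by push_cast; ring] at h1
        have h2 : k + 1 ≤ s := Nat.cast_le.mp h1
        omega
    · intro d hd heq
      obtain ⟨hd1, hdk⟩ := hD d hd
      by_cases hA : G.Adj x y
      · rw [hadj hA] at heq
        have : k = d := Nat.cast_inj.mp heq
        omega
      · have h1 := hnadj hA
        rw [heq, show ((k : ℕ∞) + 1) = ((k + 1 : ℕ) : ℕ∞) by push_cast; ring] at h1
        have h2 : k + 1 ≤ d := Nat.cast_le.mp h1
        omega
  -- the generic move correspondence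
  have main : ∀ (P0 Q0 : Finset W) (P Q : Finset V),
      (∀ v : V, ι v ∉ P0) → (∀ v : V, ι v ∉ Q0) →
      (∀ (x : V), ∀ w ∈ P0, ∀ s : ℕ, s ≤ k → G'.edist (ι x) w ≠ (s : ℕ∞)) →
      (∀ (x : V), ∀ w ∈ Q0, ∀ s : ℕ, s ≤ k → G'.edist (ι x) w ≠ (s : ℕ∞)) →
      ∀ x : V,
        ((ι x ∉ P0 ∪ P.map ι ∧ ι x ∉ Q0 ∪ Q.map ι ∧
          (∀ r ∈ Q0 ∪ Q.map ι, ∀ d ∈ D, G'.edist (ι x) r ≠ (d : ℕ∞)) ∧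
          (∀ b ∈ P0 ∪ P.map ι, ∀ s ∈ Set.Icc 1 k, G'.edist (ι x) b ≠ (s : ℕ∞)))
        ↔ (x ∉ P ∧ x ∉ Q ∧
            (∀ r ∈ Q, ∀ d ∈ (∅ : Set ℕ), G.edist x r ≠ (d : ℕ∞)) ∧
            (∀ b ∈ P, ∀ s ∈ ({1} : Set ℕ), G.edist x b ≠ (s : ℕ∞)))) := by
    intro P0 Q0 P Q hP0 hQ0 hfarP hfarQ x
    have m1 : ι x ∈ P0 ∪ P.map ι ↔ x ∈ P := by simp [hP0 x]
    have m2 : ι x ∈ Q0 ∪ Q.map ι ↔ x ∈ Q := by simp [hQ0 x]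
    have c3 : ∀ r ∈ Q0 ∪ Q.map ι, ∀ d ∈ D, G'.edist (ι x) r ≠ (d : ℕ∞) := by
      intro r hr d hd
      obtain ⟨hd1, hdk⟩ := hD d hd
      rcases Finset.mem_union.mp hr with h | h
      · exact hfarQ x r h d (le_of_lt hdk)
      · obtain ⟨y, hy, rfl⟩ := Finset.mem_map.mp h
        by_cases hxy : x = y
        · subst hxy
          rw [SimpleGraph.edist_self]
          intro hh
          have : d = 0 := by exact_mod_cast hh.symm
          omega
        · exact (hpair x y hxy).2 d hd
    have c4 : (∀ b ∈ P0 ∪ P.map ι, ∀ s ∈ Set.Icc 1 k, G'.edist (ι x) b ≠ (s : ℕ∞)) ↔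
        (∀ b ∈ P, G.edist x b ≠ (1 : ℕ∞)) := by
      constructor
      · intro h b hb
        by_cases hxb : x = b
        · subst hxb; simp [SimpleGraph.edist_self]
        · intro heq
          have hA := SimpleGraph.edist_eq_one_iff_adj.mp heq
          exact h (ι b) (Finset.mem_union_right _ (Finset.mem_map_of_mem ι hb)) k
            (Set.mem_Icc.mpr ⟨hk, le_rfl⟩) ((hc x b hxb).1 hA)
      · intro h b hb s hs
        rw [Set.mem_Icc] at hs
        rcases Finset.mem_union.mp hb with h1 | h1
        · exact hfarP x b h1 s hs.2
        · obtain ⟨y, hy, rfl⟩ := Finset.mem_map.mp h1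
          by_cases hxy : x = y
          · subst hxy
            rw [SimpleGraph.edist_self]
            intro hh
            have : s = 0 := by exact_mod_cast hh.symm
            omega
          · have hnadj : ¬ G.Adj x y :=
              fun hA => h y hy (SimpleGraph.edist_eq_one_iff_adj.mpr hA)
            exact ((hpair x y hxy).1.mpr hnadj) s (Set.mem_Icc.mpr hs)
    constructor
    · rintro ⟨h1, h2, -, h4⟩
      refine ⟨fun hx => h1 (m1.mpr hx), fun hx => h2 (m2.mpr hx), by simp, ?_⟩
      intro b hb s hs
      rw [Set.mem_singleton_iff] at hs
      subst hs
      rw [Nat.cast_one]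
      exact c4.mp h4 b hb
    · rintro ⟨h1, h2, -, h4⟩
      refine ⟨fun hx => h1 (m1.mp hx), fun hx => h2 (m2.mp hx), c3, c4.mpr ?_⟩
      intro b hb
      have := h4 b hb 1 (Set.mem_singleton 1)
      rwa [Nat.cast_one] at this
  -- left and right move correspondence
  have keyL : ∀ (B R : Finset V) (x : V),
      LeftMove G' D (Set.Icc 1 k) (Blue0 ∪ B.map ι) (Red0 ∪ R.map ι) (ι x) ↔
        LeftMove G (∅ : Set ℕ) {1} B R x := by
    intro B R x
    exact main Blue0 Red0 B R hB0 hR0 hfarB hfarR x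
  have keyR : ∀ (B R : Finset V) (x : V),
      RightMove G' D (Set.Icc 1 k) (Blue0 ∪ B.map ι) (Red0 ∪ R.map ι) (ι x) ↔
        RightMove G (∅ : Set ℕ) {1} B R x := by
    intro B R x
    have h := main Red0 Blue0 R B hR0 hB0 hfarR hfarB x
    constructor
    · rintro ⟨a1, a2, a3, a4⟩
      obtain ⟨b1, b2, -, b4⟩ := h.mp ⟨a2, a1, a3, a4⟩
      exact ⟨b2, b1, by simp, b4⟩
    · rintro ⟨a1, a2, -, a4⟩
      obtain ⟨b1, b2, b3, b4⟩ := h.mpr ⟨a2, a1, by simp, a4⟩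
      exact ⟨b2, b1, b3, b4⟩
  -- vertices outside `V(G)` admit no move
  have noMove : ∀ (B R : Finset V) (w : W), (∀ v : V, ι v ≠ w) →
      ¬ LeftMove G' D (Set.Icc 1 k) (Blue0 ∪ B.map ι) (Red0 ∪ R.map ι) w ∧
      ¬ RightMove G' D (Set.Icc 1 k) (Blue0 ∪ B.map ι) (Red0 ∪ R.map ι) w := by
    intro B R w hw
    by_cases hwB : w ∈ Blue0
    · have hmem : w ∈ Blue0 ∪ B.map ι := Finset.mem_union_left _ hwB
      exact ⟨fun h => h.1 hmem, fun h => h.1 hmem⟩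
    by_cases hwR : w ∈ Red0
    · have hmem : w ∈ Red0 ∪ R.map ι := Finset.mem_union_left _ hwR
      exact ⟨fun h => h.2.1 hmem, fun h => h.2.1 hmem⟩
    obtain ⟨⟨b, hb, hbk⟩, ⟨r, hr, hrk⟩⟩ := ha w hw hwB hwR
    have get : ∀ (u : W), G'.edist w u ≤ (k : ℕ∞) → w ≠ u →
        ∃ s : ℕ, (1 ≤ s ∧ s ≤ k) ∧ G'.edist w u = (s : ℕ∞) := by
      intro u hle hne
      have hnt : G'.edist w u ≠ ⊤ := ne_top_of_le_ne_top (by simp) hle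
      obtain ⟨s, hs⟩ := WithTop.ne_top_iff_exists.mp hnt
      refine ⟨s, ⟨?_, ?_⟩, hs.symm⟩
      · rcases Nat.eq_zero_or_pos s with h0 | h0
        · exfalso
          subst h0
          exact hne (SimpleGraph.edist_eq_zero_iff.mp (by rw [← hs]; exact Nat.cast_zero))
        · exact h0
      · rw [← hs] at hle
        exact Nat.cast_le.mp hle
    have hwb : w ≠ b := fun h => hwB (h ▸ hb)
    have hwr : w ≠ r := fun h => hwR (h ▸ hr)
    obtain ⟨sb, hsb, hsbe⟩ := get b hbk hwb
    obtain ⟨sr, hsr, hsre⟩ := get r hrk hwr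
    constructor
    · rintro ⟨-, -, -, h4⟩
      exact h4 b (Finset.mem_union_left _ hb) sb (Set.mem_Icc.mpr hsb) hsbe
    · rintro ⟨-, -, -, h4⟩
      exact h4 r (Finset.mem_union_left _ hr) sr (Set.mem_Icc.mpr hsr) hsre
  -- the recursive relabelling
  have rel : ∀ (n : ℕ) (B R : Finset V), ((B ∪ R)ᶜ).card = n →
      Nonempty (distGame G' D (Set.Icc 1 k) (Blue0 ∪ B.map ι) (Red0 ∪ R.map ι) ≡r
        distGame G (∅ : Set ℕ) ({1} : Set ℕ) B R) := by
    intro n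
    induction n using Nat.strong_induction_on with
    | _ n IH =>
      intro B R hcard
      rw [distGame, distGame]
      let fL : {x // LeftMove G (∅ : Set ℕ) {1} B R x} →
          {w // LeftMove G' D (Set.Icc 1 k) (Blue0 ∪ B.map ι) (Red0 ∪ R.map ι) w} :=
        fun x => ⟨ι x.1, (keyL B R x.1).mpr x.2⟩
      have hfL : Function.Bijective fL := by
        constructor
        · intro a b hab
          exact Subtype.ext (ι.injective (congrArg Subtype.val hab))
        · rintro ⟨w, hw⟩
          have hex : ∃ v : V, ι v = w := by
            by_contra h; push_neg at h
            exact (noMove B R w h).1 hw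
          obtain ⟨v, rfl⟩ := hex
          exact ⟨⟨v, (keyL B R v).mp hw⟩, rfl⟩
      let fR : {x // RightMove G (∅ : Set ℕ) {1} B R x} →
          {w // RightMove G' D (Set.Icc 1 k) (Blue0 ∪ B.map ι) (Red0 ∪ R.map ι) w} :=
        fun x => ⟨ι x.1, (keyR B R x.1).mpr x.2⟩
      have hfR : Function.Bijective fR := by
        constructor
        · intro a b hab
          exact Subtype.ext (ι.injective (congrArg Subtype.val hab))
        · rintro ⟨w, hw⟩
          have hex : ∃ v : V, ι v = w := by
            by_contra h; push_neg at h
            exact (noMove B R w h).2 hw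
          obtain ⟨v, rfl⟩ := hex
          exact ⟨⟨v, (keyR B R v).mp hw⟩, rfl⟩
      refine ⟨⟨(Equiv.ofBijective fL hfL).symm, (Equiv.ofBijective fR hfR).symm, ?_, ?_⟩⟩
      · intro i
        have hfx : fL ((Equiv.ofBijective fL hfL).symm i) = i :=
          (Equiv.ofBijective fL hfL).apply_symm_apply i
        have hιx : ι ((Equiv.ofBijective fL hfL).symm i).1 = i.1 := congrArg Subtype.val hfx
        show distGame G' D (Set.Icc 1 k) (insert i.1 (Blue0 ∪ B.map ι)) (Red0 ∪ R.map ι) ≡r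
          distGame G (∅ : Set ℕ) ({1} : Set ℕ)
            (insert ((Equiv.ofBijective fL hfL).symm i).1 B) R
        rw [show insert i.1 (Blue0 ∪ B.map ι)
              = Blue0 ∪ (insert ((Equiv.ofBijective fL hfL).symm i).1 B).map ι from by
            rw [← hιx, Finset.map_insert, Finset.union_insert]]
        obtain ⟨hxB, hxR, -, -⟩ := ((Equiv.ofBijective fL hfL).symm i).2
        refine (IH _ ?_ _ _ rfl).some
        calc ((insert ((Equiv.ofBijective fL hfL).symm i).1 B ∪ R)ᶜ).card
            = (((B ∪ R)ᶜ).erase ((Equiv.ofBijective fL hfL).symm i).1).card := by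
              rw [Finset.insert_union, Finset.compl_insert]
          _ < ((B ∪ R)ᶜ).card :=
              Finset.card_erase_lt_of_mem (Finset.mem_compl.2 (by simp [hxB, hxR]))
          _ = n := hcard
      · intro i
        have hfx : fR ((Equiv.ofBijective fR hfR).symm i) = i :=
          (Equiv.ofBijective fR hfR).apply_symm_apply i
        have hιx : ι ((Equiv.ofBijective fR hfR).symm i).1 = i.1 := congrArg Subtype.val hfx
        show distGame G' D (Set.Icc 1 k) (Blue0 ∪ B.map ι) (insert i.1 (Red0 ∪ R.map ι)) ≡r
          distGame G (∅ : Set ℕ) ({1} : Set ℕ) B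
            (insert ((Equiv.ofBijective fR hfR).symm i).1 R)
        rw [show insert i.1 (Red0 ∪ R.map ι)
              = Red0 ∪ (insert ((Equiv.ofBijective fR hfR).symm i).1 R).map ι from by
            rw [← hιx, Finset.map_insert, Finset.union_insert]]
        obtain ⟨hxB, hxR, -, -⟩ := ((Equiv.ofBijective fR hfR).symm i).2
        refine (IH _ ?_ _ _ rfl).some
        calc ((B ∪ insert ((Equiv.ofBijective fR hfR).symm i).1 R)ᶜ).card
            = (((B ∪ R)ᶜ).erase ((Equiv.ofBijective fR hfR).symm i).1).card := by
              rw [Finset.union_insert, Finset.compl_insert]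
          _ < ((B ∪ R)ᶜ).card :=
              Finset.card_erase_lt_of_mem (Finset.mem_compl.2 (by simp [hxB, hxR]))
          _ = n := hcard
  have hrel : Nonempty (distGame G' D (Set.Icc 1 k) Blue0 Red0 ≡r
      distGame G (∅ : Set ℕ) ({1} : Set ℕ) (∅ : Finset V) (∅ : Finset V)) := by
    have h := rel _ ∅ ∅ rfl
    rwa [show Blue0 ∪ (∅ : Finset V).map ι = Blue0 by simp,
      show Red0 ∪ (∅ : Finset V).map ι = Red0 by simp] at h
  obtain ⟨r⟩ := hrel
  have hz := relabRefl 0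
  exact ⟨fun B R _ => ⟨keyL B R, keyR B R, noMove B R⟩, ⟨r⟩,
    not_congr (relab_leLF _ _ _ _ r hz).1, (relab_leLF _ _ _ _ hz r).1,
    not_congr (relab_leLF _ _ _ _ hz r).1, (relab_leLF _ _ _ _ r hz).1⟩
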